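/- For every n ≥ 3, every connected component of the friends-and-strangers graph FS(Cycle_n, Star_n) is isomorphic to the cycle graph Cycle_{n(n−1)} on n(n−1) vertices. -/

import Mathlib

open SimpleGraph

/-- Adjacency in the friends-and-strangers graph: bijections `σ` and `τ` are adjacent iff there
is an edge `{a, b}` of `X` such that `{σ a, σ b}` is an edge of `Y`, `σ a = τ b`, `σ b = τ a`,
and `σ c = τ c` for every vertex `c` other than `a` and `b`. -/
def fsAdj {α β : Type*} (X : SimpleGraph α) (Y : SimpleGraph β) (σ τ : α ≃ β) : Prop :=
  ∃ a b : α, X.Adj a b ∧ Y.Adj (σ a) (σ b) ∧ σ a = τ b ∧ σ b = τ a ∧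
    ∀ c : α, c ≠ a → c ≠ b → σ c = τ c

/-- The friends-and-strangers graph `FS(X, Y)` of two simple graphs on the same number of
vertices; its vertices are bijections from `V(X)` to `V(Y)`. -/
def FS {α β : Type*} (X : SimpleGraph α) (Y : SimpleGraph β) : SimpleGraph (α ≃ β) where
  Adj := fsAdj X Y
  symm := by
    constructor
    rintro σ τ ⟨a, b, hX, hY, h1, h2, h3⟩
    refine ⟨a, b, hX, ?_, h2.symm, h1.symm, fun c hca hcb => (h3 c hca hcb).symm⟩
    rw [← h2, ← h1]
    exact hY.symm
  loopless := by
    constructor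
    rintro σ ⟨a, b, hX, hY, h1, _, _⟩
    exact hX.ne (σ.injective h1)

/-- The star graph on `Fin n`: the vertex `0` is adjacent to every other vertex, and there are
no other edges. -/
def StarG (n : ℕ) : SimpleGraph (Fin n) :=
  SimpleGraph.fromRel (fun a _ => a.val = 0)

namespace FSAux
open Fin.NatCast Fin.CommRing
variable {n : ℕ}

def step (σ : Fin (n + 3) ≃ Fin (n + 3)) : Fin (n + 3) ≃ Fin (n + 3) :=
  (Equiv.swap (σ.symm 0) (σ.symm 0 + 1)).trans σ

lemma step_apply (σ : Fin (n + 3) ≃ Fin (n + 3)) (x : Fin (n + 3)) :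
    step σ x = σ (Equiv.swap (σ.symm 0) (σ.symm 0 + 1) x) := rfl

lemma hole_step (σ : Fin (n + 3) ≃ Fin (n + 3)) :
    (step σ).symm 0 = σ.symm 0 + 1 := by
  simp [step]

lemma starG_adj {x y : Fin (n + 3)} :
    (StarG (n + 3)).Adj x y ↔ x ≠ y ∧ (x = 0 ∨ y = 0) := by
  rw [StarG, fromRel_adj]
  exact and_congr_right fun _ => or_congr (by rw [Fin.ext_iff]; rfl) (by rw [Fin.ext_iff]; rfl)

lemma self_ne_add_one (x : Fin (n + 3)) : x ≠ x + 1 := by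
  intro h
  have h2 : (1 : Fin (n + 3)) = 0 := by
    have h3 := sub_eq_zero_of_eq h.symm
    rwa [add_sub_cancel_left] at h3
  have := congrArg Fin.val h2
  simp at this

/-- swapping at an edge gives the explicit permutation -/
lemma adj_eq_swap_trans {σ τ : Fin (n + 3) ≃ Fin (n + 3)} {a b : Fin (n + 3)}
    (h1 : σ a = τ b) (h2 : σ b = τ a) (h3 : ∀ c, c ≠ a → c ≠ b → σ c = τ c) :
    τ = (Equiv.swap a b).trans σ := by
  ext c
  rcases eq_or_ne c a with rfl | hca
  · simp [Equiv.swap_apply_left, ← h2]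
  rcases eq_or_ne c b with rfl | hcb
  · simp [Equiv.swap_apply_right, ← h1]
  · simp [Equiv.swap_apply_of_ne_of_ne hca hcb, (h3 c hca hcb).symm]

lemma fs_adj_iff {σ τ : Fin (n + 3) ≃ Fin (n + 3)} :
    (FS (cycleGraph (n + 3)) (StarG (n + 3))).Adj σ τ ↔ τ = step σ ∨ σ = step τ := by
  constructor
  · rintro ⟨a, b, hC, hS, h1, h2, h3⟩
    have hτ : τ = (Equiv.swap a b).trans σ := adj_eq_swap_trans h1 h2 h3
    have hστ : σ = (Equiv.swap a b).trans τ := by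
      rw [hτ, ← Equiv.trans_assoc, Equiv.swap_swap, Equiv.refl_trans]
    rw [starG_adj] at hS
    have hC' : a - b = 1 ∨ b - a = 1 := cycleGraph_adj.mp hC
    rcases hS.2 with h0 | h0
    · -- σ a = 0, so a is the hole of σ
      have ha : σ.symm 0 = a := by rw [← h0, Equiv.symm_apply_apply]
      rcases hC' with hab | hab
      · -- a = b + 1 ; here σ = step τ
        right
        have hb : τ.symm 0 = b := by
          rw [hτ]; simp [← ha, Equiv.symm_apply_apply, Equiv.swap_apply_left]
        have hba : b + 1 = a := by rw [← hab]; ring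
        rw [hστ, step, hb, hba, Equiv.swap_comm]
      · -- b = a + 1 ; τ = step σ
        left
        have hba : a + 1 = b := by rw [← hab]; ring
        rw [hτ, step, ha, hba]
    · -- σ b = 0
      have ha : σ.symm 0 = b := by rw [← h0, Equiv.symm_apply_apply]
      have hτ' : τ = (Equiv.swap b a).trans σ := by rw [hτ, Equiv.swap_comm]
      have hστ' : σ = (Equiv.swap b a).trans τ := by rw [hστ, Equiv.swap_comm]
      rcases hC' with hab | hab
      · left
        have hba : b + 1 = a := by rw [← hab]; ring
        rw [hτ', step, ha, hba]
      · right
        have hb : τ.symm 0 = a := by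
          rw [hτ']; simp [← ha, Equiv.symm_apply_apply, Equiv.swap_apply_left]
        have hba : a + 1 = b := by rw [← hab]; ring
        rw [hστ', step, hb, hba, Equiv.swap_comm]
  · have key : ∀ ρ : Fin (n + 3) ≃ Fin (n + 3),
        (FS (cycleGraph (n + 3)) (StarG (n + 3))).Adj ρ (step ρ) := by
      intro ρ
      refine ⟨ρ.symm 0, ρ.symm 0 + 1, ?_, ?_, ?_, ?_, ?_⟩
      · exact cycleGraph_adj.mpr (Or.inr (add_sub_cancel_left _ _))
      · rw [starG_adj]
        constructor
        · intro h
          exact self_ne_add_one _ (ρ.injective h)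
        · left; exact ρ.apply_symm_apply 0
      · rw [step_apply, Equiv.swap_apply_right]
      · rw [step_apply, Equiv.swap_apply_left]
      · intro c hc1 hc2
        rw [step_apply, Equiv.swap_apply_of_ne_of_ne hc1 hc2]
    rintro (rfl | rfl)
    · exact key σ
    · exact (FS _ _).adj_symm (key τ)


lemma cast_succ' (j : ℕ) : ((j + 1 : ℕ) : Fin (n + 3)) = (j : Fin (n + 3)) + 1 := by
  push_cast; ring

lemma natCast_inj_of_lt {a b : ℕ} (ha : a < n + 3) (hb : b < n + 3)
    (h : (a : Fin (n + 3)) = b) : a = b := by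
  have := congrArg Fin.val h
  rwa [Fin.val_cast_of_lt ha, Fin.val_cast_of_lt hb] at this

lemma add_cast_inj {p : Fin (n + 3)} {a b : ℕ} (ha : a < n + 3) (hb : b < n + 3) :
    p + (a : Fin (n + 3)) = p + b ↔ a = b := by
  constructor
  · intro h
    exact natCast_inj_of_lt ha hb (add_left_cancel h)
  · rintro rfl; rfl

def sPerm (p : Fin (n + 3)) : ℕ → (Fin (n + 3) ≃ Fin (n + 3))
  | 0 => Equiv.refl _
  | k + 1 => (Equiv.swap (p + (k : Fin (n + 3))) (p + ((k + 1 : ℕ) : Fin (n + 3)))).trans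
      (sPerm p k)

lemma sPerm_apply (p : Fin (n + 3)) : ∀ k, k ≤ n + 2 → ∀ i, i < n + 3 →
    sPerm p k (p + (i : Fin (n + 3))) =
      if i < k then p + ((i + 1 : ℕ) : Fin (n + 3)) else
        if i = k then p else p + (i : Fin (n + 3)) := by
  intro k
  induction k with
  | zero =>
      intro _ i hi
      rcases eq_or_ne i 0 with rfl | h
      · simp [sPerm]
      · simp [sPerm, h]
  | succ k ih =>
      intro hk i hi
      have hk' : k ≤ n + 2 := by omega
      rw [sPerm, Equiv.trans_apply]
      rcases eq_or_ne i k with rfl | hik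
      · rw [Equiv.swap_apply_left, ih hk' (i + 1) (by omega)]
        have h1 : ¬ (i + 1 < i) := by omega
        have h2 : ¬ (i + 1 = i) := by omega
        simp [h1, h2, Nat.lt_succ_self]
      rcases eq_or_ne i (k + 1) with rfl | hik1
      · rw [Equiv.swap_apply_right, ih hk' k (by omega)]
        have h1 : ¬ (k < k) := lt_irrefl k
        simp [h1]
      · have e1 : p + (i : Fin (n + 3)) ≠ p + (k : Fin (n + 3)) := by
          rw [Ne, add_cast_inj hi (by omega)]; exact hik
        have e2 : p + (i : Fin (n + 3)) ≠ p + ((k + 1 : ℕ) : Fin (n + 3)) := by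
          rw [Ne, add_cast_inj hi (by omega)]; exact hik1
        rw [Equiv.swap_apply_of_ne_of_ne e1 e2, ih hk' i hi]
        rcases lt_or_ge i k with h | h
        · simp [h, Nat.lt_succ_of_lt h]
        · have h1 : ¬ (i < k) := by omega
          have h2 : ¬ (i < k + 1) := by omega
          simp [h1, h2, hik, hik1]


def rho (p : Fin (n + 3)) : Fin (n + 3) ≃ Fin (n + 3) := sPerm p (n + 3)

lemma rho_unfold (p x : Fin (n + 3)) :
    rho p x = sPerm p (n + 2) (Equiv.swap (p + ((n + 2 : ℕ) : Fin (n + 3))) p x) := by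
  have hB : p + ((n + 2 + 1 : ℕ) : Fin (n + 3)) = p := by
    have h0 : ((n + 2 + 1 : ℕ) : Fin (n + 3)) = 0 := by
      show ((n + 3 : ℕ) : Fin (n + 3)) = 0
      simp
    rw [h0, add_zero]
  show (sPerm p (n + 2 + 1)) x = _
  rw [sPerm, Equiv.trans_apply]
  exact congrArg (sPerm p (n + 2))
    (congrFun (congrArg (fun y => (Equiv.swap (p + ((n + 2 : ℕ) : Fin (n + 3))) y : _ → _)) hB) x)

lemma rho_fix (p : Fin (n + 3)) : rho p p = p := by
  rw [rho_unfold, Equiv.swap_apply_right]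
  have h := sPerm_apply p (n + 2) le_rfl (n + 2) (by omega)
  simpa using h

lemma rho_apply (p : Fin (n + 3)) {d : ℕ} (h1 : 1 ≤ d) (h2 : d ≤ n + 2) :
    rho p (p + (d : Fin (n + 3))) = p + ((d % (n + 2) + 1 : ℕ) : Fin (n + 3)) := by
  rw [rho_unfold]
  rcases eq_or_ne d (n + 2) with rfl | hd
  · rw [Equiv.swap_apply_left]
    have h := sPerm_apply p (n + 2) le_rfl 0 (by omega)
    have hmod : (n + 2) % (n + 2) = 0 := Nat.mod_self _
    rw [hmod]
    simpa using h
  · have e1 : p + (d : Fin (n + 3)) ≠ p + ((n + 2 : ℕ) : Fin (n + 3)) := by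
      rw [Ne, add_cast_inj (by omega) (by omega)]; exact hd
    have e2 : p + (d : Fin (n + 3)) ≠ p := by
      intro h
      have h' : p + (d : Fin (n + 3)) = p + ((0 : ℕ) : Fin (n + 3)) := by simpa using h
      rw [add_cast_inj (by omega) (by omega)] at h'
      omega
    rw [Equiv.swap_apply_of_ne_of_ne e1 e2, sPerm_apply p (n + 2) le_rfl d (by omega)]
    have hlt : d < n + 2 := by omega
    have hmod : d % (n + 2) = d := Nat.mod_eq_of_lt hlt
    rw [hmod]
    simp [hlt]

lemma rho_pow_fix (p : Fin (n + 3)) (j : ℕ) : (rho p ^ j) p = p := by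
  induction j with
  | zero => rfl
  | succ j ih => rw [pow_succ, Equiv.Perm.mul_apply, rho_fix, ih]

lemma rho_pow_apply (p : Fin (n + 3)) : ∀ j : ℕ, ∀ d : ℕ, 1 ≤ d → d ≤ n + 2 →
    (rho p ^ j) (p + (d : Fin (n + 3))) =
      p + (((d - 1 + j) % (n + 2) + 1 : ℕ) : Fin (n + 3)) := by
  intro j
  induction j with
  | zero =>
      intro d h1 h2
      have h3 : (d - 1 + 0) % (n + 2) = d - 1 := Nat.mod_eq_of_lt (by omega)
      have h4 : (d - 1 + 0) % (n + 2) + 1 = d := by omega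
      rw [pow_zero, h4]
      rfl
  | succ j ih =>
      intro d h1 h2
      rw [pow_succ, Equiv.Perm.mul_apply, rho_apply p h1 h2]
      set e := d % (n + 2) + 1 with he
      have he1 : 1 ≤ e := by omega
      have he2 : e ≤ n + 2 := by
        have := Nat.mod_lt d (show 0 < n + 2 by omega)
        omega
      rw [ih e he1 he2]
      congr 2
      have h5 : e - 1 = d % (n + 2) := by omega
      rw [h5, Nat.mod_add_mod]
      have h6 : d + j = d - 1 + (j + 1) := by omega
      rw [h6]

lemma exists_rep (p x : Fin (n + 3)) (h : x ≠ p) :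
    ∃ d : ℕ, 1 ≤ d ∧ d ≤ n + 2 ∧ x = p + (d : Fin (n + 3)) := by
  refine ⟨(x - p).val, ?_, ?_, ?_⟩
  · have h1 : x - p ≠ 0 := sub_ne_zero.mpr h
    have h2 : 0 < (x - p).val := Fin.pos_iff_ne_zero.mpr h1
    omega
  · have := (x - p).is_lt; omega
  · rw [Fin.cast_val_eq_self, add_sub_cancel]

lemma rho_pow_order (p : Fin (n + 3)) : rho p ^ (n + 2) = 1 := by
  apply Equiv.ext
  intro x
  rcases eq_or_ne x p with rfl | h
  · rw [rho_pow_fix]; rfl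
  · obtain ⟨d, hd1, hd2, rfl⟩ := exists_rep p x h
    rw [rho_pow_apply p (n + 2) d hd1 hd2]
    have h3 : (d - 1 + (n + 2)) % (n + 2) = d - 1 := by
      rw [Nat.add_mod_right, Nat.mod_eq_of_lt (by omega)]
    have h4 : (d - 1 + (n + 2)) % (n + 2) + 1 = d := by omega
    rw [h4]
    rfl

lemma rho_pow_eq_one_iff (p : Fin (n + 3)) (j : ℕ) :
    rho p ^ j = 1 ↔ (n + 2) ∣ j := by
  constructor
  · intro h
    have happ : (rho p ^ j) (p + ((1 : ℕ) : Fin (n + 3))) = p + ((1 : ℕ) : Fin (n + 3)) := by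
      rw [h]; rfl
    rw [rho_pow_apply p j 1 le_rfl (by omega)] at happ
    have hb : (1 - 1 + j) % (n + 2) + 1 < n + 3 := by
      have := Nat.mod_lt (1 - 1 + j) (show 0 < n + 2 by omega)
      omega
    have heq := (add_cast_inj (p := p) hb (by omega)).mp happ
    have hmod : j % (n + 2) = 0 := by
      have h7 : (1 - 1 + j) = j := by omega
      rw [h7] at heq
      omega
    exact Nat.dvd_of_mod_eq_zero hmod
  · rintro ⟨t, rfl⟩
    rw [pow_mul, rho_pow_order, one_pow]


lemma hole_iterate (σ : Fin (n + 3) ≃ Fin (n + 3)) (k : ℕ) :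
    (step^[k] σ).symm 0 = σ.symm 0 + (k : Fin (n + 3)) := by
  induction k with
  | zero => simp
  | succ k ih =>
      rw [Function.iterate_succ_apply', hole_step, ih, cast_succ', add_assoc]

lemma iterate_eq_sPerm (σ : Fin (n + 3) ≃ Fin (n + 3)) (k : ℕ) :
    step^[k] σ = (sPerm (σ.symm 0) k).trans σ := by
  induction k with
  | zero => simp [sPerm]
  | succ k ih =>
      rw [Function.iterate_succ_apply', ih]
      show step ((sPerm (σ.symm 0) k).trans σ) = _
      rw [step, sPerm]
      have hh : ((sPerm (σ.symm 0) k).trans σ).symm 0 = σ.symm 0 + (k : Fin (n + 3)) := by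
        rw [← ih, hole_iterate]
      rw [hh, ← Equiv.trans_assoc, cast_succ', add_assoc]

lemma step_iterate_n (σ : Fin (n + 3) ≃ Fin (n + 3)) :
    step^[n + 3] σ = (rho (σ.symm 0)).trans σ :=
  iterate_eq_sPerm σ (n + 3)

lemma hole_rho_pow_trans (σ : Fin (n + 3) ≃ Fin (n + 3)) (j : ℕ) :
    (((rho (σ.symm 0)) ^ j).trans σ).symm 0 = σ.symm 0 := by
  rw [Equiv.symm_trans_apply, Equiv.symm_apply_eq, rho_pow_fix]

lemma step_iterate_mul (j : ℕ) (σ : Fin (n + 3) ≃ Fin (n + 3)) :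
    step^[(n + 3) * j] σ = ((rho (σ.symm 0)) ^ j).trans σ := by
  induction j generalizing σ with
  | zero => simp; rfl
  | succ j ih =>
      have hmul : (n + 3) * (j + 1) = (n + 3) * j + (n + 3) := by ring
      rw [hmul, Function.iterate_add_apply, step_iterate_n, ih]
      have hh : ((rho (σ.symm 0)).trans σ).symm 0 = σ.symm 0 := by
        have := hole_rho_pow_trans σ 1
        simpa [pow_one] using this
      rw [hh, ← Equiv.trans_assoc]
      congr 1
      rw [pow_succ']
      rfl

lemma step_period (σ : Fin (n + 3) ≃ Fin (n + 3)) :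
    step^[(n + 3) * (n + 2)] σ = σ := by
  rw [step_iterate_mul, rho_pow_order]
  rfl

lemma step_iterate_fix_dvd {σ : Fin (n + 3) ≃ Fin (n + 3)} {k : ℕ}
    (h : step^[k] σ = σ) : (n + 3) * (n + 2) ∣ k := by
  have hhole : σ.symm 0 + (k : Fin (n + 3)) = σ.symm 0 := by
    rw [← hole_iterate, h]
  have hk0 : (k : Fin (n + 3)) = 0 := by
    have h' : σ.symm 0 + (k : Fin (n + 3)) = σ.symm 0 + 0 := by rw [add_zero, hhole]
    exact add_left_cancel h' 
  obtain ⟨j, rfl⟩ := (Fin.natCast_eq_zero).mp hk0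
  rw [step_iterate_mul] at h
  have hone : (rho (σ.symm 0)) ^ j = 1 := by
    apply Equiv.ext
    intro x
    have hsym : ((rho (σ.symm 0)) ^ j).symm x = x := by
      have := congrArg (fun e : Fin (n + 3) ≃ Fin (n + 3) => e.symm (σ x)) h
      simpa using this
    have h2 := congrArg (rho (σ.symm 0) ^ j) hsym
    rw [Equiv.apply_symm_apply] at h2
    simpa using h2.symm
  exact mul_dvd_mul_left (n + 3) ((rho_pow_eq_one_iff _ j).mp hone)

lemma step_injective : Function.Injective (step (n := n)) := by
  intro σ τ h
  have hp : σ.symm 0 = τ.symm 0 := by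
    have h1 := hole_step σ
    have h2 := hole_step τ
    rw [h] at h1
    have := h1.symm.trans h2
    exact add_right_cancel this
  set p := σ.symm 0 with hpdef
  have hstep : (Equiv.swap p (p + 1)).trans σ = (Equiv.swap p (p + 1)).trans τ := by
    have e1 : step σ = (Equiv.swap p (p + 1)).trans σ := rfl
    have e2 : step τ = (Equiv.swap p (p + 1)).trans τ := by rw [step, ← hp]
    rw [← e1, ← e2, h]
  calc σ = (Equiv.swap p (p + 1)).trans ((Equiv.swap p (p + 1)).trans σ) := by
            rw [← Equiv.trans_assoc, Equiv.swap_swap, Equiv.refl_trans]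
    _ = (Equiv.swap p (p + 1)).trans ((Equiv.swap p (p + 1)).trans τ) := by rw [hstep]
    _ = τ := by rw [← Equiv.trans_assoc, Equiv.swap_swap, Equiv.refl_trans]


lemma step_period_mul (t : ℕ) (σ : Fin (n + 3) ≃ Fin (n + 3)) :
    step^[(n + 3) * (n + 2) * t] σ = σ := by
  induction t with
  | zero => rfl
  | succ t ih =>
      have h : (n + 3) * (n + 2) * (t + 1) = (n + 3) * (n + 2) * t + (n + 3) * (n + 2) := by
        ring
      rw [h, Function.iterate_add_apply, step_period, ih]

lemma iterate_mod (σ : Fin (n + 3) ≃ Fin (n + 3)) (k : ℕ) :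
    step^[k] σ = step^[k % ((n + 3) * (n + 2))] σ := by
  set M := (n + 3) * (n + 2) with hM
  have h := Function.iterate_add_apply step (M * (k / M)) (k % M) σ
  rw [Nat.div_add_mod] at h
  rw [h, step_period_mul]

lemma iterate_inj_le {σ : Fin (n + 3) ≃ Fin (n + 3)} {r s : ℕ}
    (hr : r < (n + 3) * (n + 2)) (hs : s < (n + 3) * (n + 2)) (hrs : r ≤ s)
    (h : step^[r] σ = step^[s] σ) : r = s := by
  have hcomp : step^[r] (step^[s - r] σ) = step^[r] σ := by
    rw [← Function.iterate_add_apply, show r + (s - r) = s by omega, ← h]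
  have hcancel : step^[s - r] σ = σ := (step_injective.iterate r) hcomp
  have hdvd := step_iterate_fix_dvd hcancel
  rcases Nat.eq_zero_or_pos (s - r) with h0 | hpos
  · omega
  · have := Nat.le_of_dvd hpos hdvd; omega

lemma iterate_eq_iff (σ : Fin (n + 3) ≃ Fin (n + 3)) (a b : ℕ) :
    step^[a] σ = step^[b] σ ↔ a % ((n + 3) * (n + 2)) = b % ((n + 3) * (n + 2)) := by
  have hMpos : 0 < (n + 3) * (n + 2) := by positivity
  constructor
  · intro h
    rw [iterate_mod σ a, iterate_mod σ b] at h
    have ha := Nat.mod_lt a hMpos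
    have hb := Nat.mod_lt b hMpos
    rcases le_total (a % ((n + 3) * (n + 2))) (b % ((n + 3) * (n + 2))) with hle | hle
    · exact iterate_inj_le ha hb hle h
    · exact (iterate_inj_le hb ha hle h.symm).symm
  · intro h
    rw [iterate_mod σ a, iterate_mod σ b, h]

section Components

variable (σ₀ : Fin (n + 3) ≃ Fin (n + 3))

local notation "G" => FS (cycleGraph (n + 3)) (StarG (n + 3))
local notation "M" => (n + 3) * (n + 2)

lemma adj_step (σ : Fin (n + 3) ≃ Fin (n + 3)) : (G).Adj σ (step σ) :=
  fs_adj_iff.mpr (Or.inl rfl)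

lemma mk_iterate (k : ℕ) :
    (G).connectedComponentMk (step^[k] σ₀) = (G).connectedComponentMk σ₀ := by
  induction k with
  | zero => rfl
  | succ k ih =>
      rw [Function.iterate_succ_apply', ← ih]
      exact ConnectedComponent.sound (adj_step _).reachable.symm

lemma walk_exists {u v : Fin (n + 3) ≃ Fin (n + 3)} (w : (G).Walk u v) :
    ∃ k : ℕ, v = step^[k] u := by
  induction w with
  | nil => exact ⟨0, rfl⟩
  | @cons u x v h p ih =>
      obtain ⟨k, rfl⟩ := ih
      rcases fs_adj_iff.mp h with hx | hu
      · exact ⟨k + 1, by rw [Function.iterate_succ_apply, ← hx]⟩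
      · refine ⟨k + (M - 1), ?_⟩
        have hx : x = step^[M - 1] u := by
          have h1 : step^[M - 1] u = step^[M - 1] (step x) := by rw [hu]
          rw [← Function.iterate_succ_apply] at h1
          have h2 : M - 1 + 1 = M := by
            have : 0 < M := by positivity
            omega
          rw [Nat.succ_eq_add_one, h2, step_period] at h1
          exact h1.symm
        rw [Function.iterate_add_apply, ← hx]

lemma adj_iter_iff (i j : ℕ) :
    (G).Adj (step^[i] σ₀) (step^[j] σ₀) ↔
      (j % M = (i + 1) % M ∨ i % M = (j + 1) % M) := by
  rw [fs_adj_iff]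
  constructor
  · rintro (h | h)
    · left
      rw [← Function.iterate_succ_apply' step i σ₀] at h
      exact (iterate_eq_iff σ₀ j (i + 1)).mp h
    · right
      rw [← Function.iterate_succ_apply' step j σ₀] at h
      exact (iterate_eq_iff σ₀ i (j + 1)).mp h
  · rintro (h | h)
    · left
      rw [← Function.iterate_succ_apply' step i σ₀]
      exact (iterate_eq_iff σ₀ j (i + 1)).mpr h
    · right
      rw [← Function.iterate_succ_apply' step j σ₀]
      exact (iterate_eq_iff σ₀ i (j + 1)).mpr h

lemma component_iso (C : (G).ConnectedComponent)
    (hσ₀ : (G).connectedComponentMk σ₀ = C) :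
    Nonempty ((SimpleGraph.induce C.supp (G)) ≃g cycleGraph (M)) := by
  have hMpos : 0 < M := by positivity
  have hM1 : 1 < M := by nlinarith
  have hval1 : ((1 : Fin (M)) : ℕ) = 1 := by
    rw [Fin.val_one']
    exact Nat.mod_eq_of_lt hM1
  -- the vertex map
  have hmem : ∀ i : ℕ, step^[i] σ₀ ∈ C.supp := by
    intro i
    rw [SimpleGraph.ConnectedComponent.mem_supp_iff, mk_iterate, hσ₀]
  set f : Fin (M) → C.supp := fun i => ⟨step^[i.val] σ₀, hmem i.val⟩ with hf
  have hinj : Function.Injective f := by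
    intro i j hij
    have h := Subtype.ext_iff.mp hij
    have := (iterate_eq_iff σ₀ i.val j.val).mp h
    rw [Nat.mod_eq_of_lt i.isLt, Nat.mod_eq_of_lt j.isLt] at this
    exact Fin.ext this
  have hsurj : Function.Surjective f := by
    rintro ⟨τ, hτ⟩
    rw [SimpleGraph.ConnectedComponent.mem_supp_iff] at hτ
    have hreach : (G).Reachable σ₀ τ :=
      SimpleGraph.ConnectedComponent.exact (hσ₀.trans hτ.symm)
    obtain ⟨w⟩ := hreach
    obtain ⟨k, rfl⟩ := walk_exists w
    refine ⟨⟨k % (M), Nat.mod_lt _ hMpos⟩, ?_⟩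
    apply Subtype.ext
    exact (iterate_mod σ₀ k).symm
  -- the step successor corresponds to +1 in Fin M
  have hadj : ∀ i j : Fin (M),
      (SimpleGraph.induce C.supp (G)).Adj (f i) (f j) ↔ (cycleGraph (M)).Adj i j := by
    intro i j
    have hL : (SimpleGraph.induce C.supp (G)).Adj (f i) (f j) ↔
        (G).Adj (step^[i.val] σ₀) (step^[j.val] σ₀) := Iff.rfl
    rw [hL, adj_iter_iff]
    have hplus : ∀ a b : Fin (M), (b.val % (M) = (a.val + 1) % (M)) ↔ b = a + 1 := by
      intro a b
      rw [Nat.mod_eq_of_lt b.isLt]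
      constructor
      · intro h
        apply Fin.ext
        rw [Fin.add_def, hval1, h]
      · intro h
        rw [h, Fin.add_def, hval1]
    rw [hplus i j, hplus j i, cycleGraph_adj']
    have hsub : ∀ a b : Fin (M), (a - b).val = 1 ↔ a = b + 1 := by
      intro a b
      constructor
      · intro h
        have : a - b = 1 := by
          apply Fin.ext; rw [h, hval1]
        rw [sub_eq_iff_eq_add] at this
        rw [this]
        exact add_comm 1 b
      · intro h
        rw [h, add_sub_cancel_left, hval1]
    rw [hsub i j, hsub j i]
    tauto
  exact ⟨(SimpleGraph.Iso.symm ⟨Equiv.ofBijective f ⟨hinj, hsurj⟩, hadj _ _⟩ : _)⟩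

end Components
end FSAux


/-- For every `n ≥ 3`, every connected component of `FS(Cycle_n, Star_n)` is
isomorphic to the cycle graph on `n * (n - 1)` vertices. -/
theorem fs_cycle_star_components_iso_cycle (n : ℕ) (hn : 3 ≤ n)
    (C : (FS (cycleGraph n) (StarG n)).ConnectedComponent) :
    Nonempty ((SimpleGraph.induce C.supp (FS (cycleGraph n) (StarG n))) ≃g
      cycleGraph (n * (n - 1))) := by
  obtain ⟨m, rfl⟩ : ∃ m, n = m + 3 := ⟨n - 3, by omega⟩
  have hM : (m + 3) * (m + 3 - 1) = (m + 3) * (m + 2) := rfl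
  rw [hM]
  obtain ⟨σ₀, hσ₀⟩ := C.exists_rep
  exact FSAux.component_iso σ₀ C hσ₀
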